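/- Let T ≥ 1 be an integer and define Φ_T = h^T ∘ g̃, the map taking a prior covariance through one measurement update followed by T time updates. If X and Y are n×n symmetric positive semidefinite matrices with X ≤ Y in the Loewner order, then Φ_T(X) ≤ Φ_T(Y). In particular the maps h and g̃ themselves are monotone with respect to the Loewner order on positive semidefinite matrices. -/

import Mathlib

open Matrix

private lemma psd_mmT {m n : ℕ} {D : Matrix (Fin n) (Fin n) ℝ}
    (hD : D.PosSemidef) (B : Matrix (Fin m) (Fin n) ℝ) : (B * D * Bᵀ).PosSemidef := by
  simpa [Matrix.conjTranspose_eq_transpose_of_trivial] using hD.mul_mul_conjTranspose_same B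

private lemma gt_mono {n q : ℕ} (C : Matrix (Fin q) (Fin n) ℝ)
    (R : Matrix (Fin q) (Fin q) ℝ) (hR : R.PosDef)
    (X Y : Matrix (Fin n) (Fin n) ℝ) (hX : X.PosSemidef) (hY : Y.PosSemidef)
    (hXY : (Y - X).PosSemidef) :
    ((Y - Y * Cᵀ * (C * Y * Cᵀ + R)⁻¹ * C * Y) -
      (X - X * Cᵀ * (C * X * Cᵀ + R)⁻¹ * C * X)).PosSemidef := by
  have hXt : Xᵀ = X := by
    have h0 := hX.isHermitian
    rw [Matrix.IsHermitian, Matrix.conjTranspose_eq_transpose_of_trivial] at h0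
    exact h0
  have hYt : Yᵀ = Y := by
    have h0 := hY.isHermitian
    rw [Matrix.IsHermitian, Matrix.conjTranspose_eq_transpose_of_trivial] at h0
    exact h0
  have hSX : (C * X * Cᵀ + R).PosDef := Matrix.PosDef.posSemidef_add (psd_mmT hX C) hR
  have hSY : (C * Y * Cᵀ + R).PosDef := Matrix.PosDef.posSemidef_add (psd_mmT hY C) hR
  set SX := C * X * Cᵀ + R with hSXdef
  set SY := C * Y * Cᵀ + R with hSYdef
  set V := SX⁻¹ with hVdef
  set W := SY⁻¹ with hWdef
  have hVt : Vᵀ = V := by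
    have h0 := hSX.inv.isHermitian
    rw [Matrix.IsHermitian, Matrix.conjTranspose_eq_transpose_of_trivial] at h0
    exact h0
  have hWt : Wᵀ = W := by
    have h0 := hSY.inv.isHermitian
    rw [Matrix.IsHermitian, Matrix.conjTranspose_eq_transpose_of_trivial] at h0
    exact h0
  have hV1 : SX * V = 1 := Matrix.mul_nonsing_inv _ ((Matrix.isUnit_iff_isUnit_det _).mp hSX.isUnit)
  have hV2 : V * SX = 1 := Matrix.nonsing_inv_mul _ ((Matrix.isUnit_iff_isUnit_det _).mp hSX.isUnit)
  have hW2 : W * SY = 1 := Matrix.nonsing_inv_mul _ ((Matrix.isUnit_iff_isUnit_det _).mp hSY.isUnit)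
  have hV1' : ∀ Z : Matrix (Fin q) (Fin n) ℝ, SX * (V * Z) = Z := fun Z => by
    rw [← Matrix.mul_assoc, hV1, Matrix.one_mul]
  have hV2' : ∀ Z : Matrix (Fin q) (Fin n) ℝ, V * (SX * Z) = Z := fun Z => by
    rw [← Matrix.mul_assoc, hV2, Matrix.one_mul]
  set K := Y * Cᵀ * W with hKdef
  -- generic completion-of-squares expansion
  have ringid : ∀ P : Matrix (Fin n) (Fin n) ℝ,
      (1 - K * C) * P * (1 - K * C)ᵀ + K * R * Kᵀ
        = P - K * (C * P) - (P * Cᵀ) * Kᵀ + K * (C * P * Cᵀ + R) * Kᵀ := by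
    intro P
    simp only [Matrix.transpose_sub, Matrix.transpose_mul, Matrix.transpose_one,
      Matrix.sub_mul, Matrix.mul_sub, Matrix.mul_add, Matrix.add_mul, Matrix.one_mul,
      Matrix.mul_one, Matrix.mul_assoc]
    abel
  have hKSY : K * SY = Y * Cᵀ := by
    rw [hKdef, Matrix.mul_assoc, hW2, Matrix.mul_one]
  have E1 : (1 - K * C) * Y * (1 - K * C)ᵀ + K * R * Kᵀ = Y - Y * Cᵀ * W * C * Y := by
    rw [ringid Y, ← hSYdef, hKSY]
    rw [hKdef]
    simp only [Matrix.mul_assoc]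
    abel
  have E3 : ((1 - K * C) * X * (1 - K * C)ᵀ + K * R * Kᵀ) - (X - X * Cᵀ * V * C * X)
      = (K - X * Cᵀ * V) * SX * (K - X * Cᵀ * V)ᵀ := by
    rw [ringid X, ← hSXdef]
    simp only [Matrix.transpose_sub, Matrix.transpose_mul, Matrix.transpose_transpose,
      hXt, hVt]
    simp only [Matrix.sub_mul, Matrix.mul_sub, Matrix.mul_assoc, hV1', hV2']
    abel
  have E2 : (1 - K * C) * (Y - X) * (1 - K * C)ᵀ
      = ((1 - K * C) * Y * (1 - K * C)ᵀ + K * R * Kᵀ)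
        - ((1 - K * C) * X * (1 - K * C)ᵀ + K * R * Kᵀ) := by
    simp only [Matrix.mul_sub, Matrix.sub_mul]
    abel
  have key : (Y - Y * Cᵀ * W * C * Y) - (X - X * Cᵀ * V * C * X)
      = (1 - K * C) * (Y - X) * (1 - K * C)ᵀ + (K - X * Cᵀ * V) * SX * (K - X * Cᵀ * V)ᵀ := by
    rw [E2, ← E1, ← E3]
    abel
  rw [key]
  exact (psd_mmT hXY _).add (psd_mmT hSX.posSemidef _)

/-- Monotonicity of the time update `h`, the measurement update `g̃`, and
`Φ_T = h^T ∘ g̃` with respect to the Loewner order on positive semidefinite matrices. -/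
theorem stmt_4 {n q : ℕ} (A : Matrix (Fin n) (Fin n) ℝ) (C : Matrix (Fin q) (Fin n) ℝ)
    (Q : Matrix (Fin n) (Fin n) ℝ) (hQ : Q.PosSemidef)
    (R : Matrix (Fin q) (Fin q) ℝ) (hR : R.PosDef)
    (h gt : Matrix (Fin n) (Fin n) ℝ → Matrix (Fin n) (Fin n) ℝ)
    (hh : ∀ X, h X = A * X * Aᵀ + Q)
    (hgt : ∀ X, gt X = X - X * Cᵀ * (C * X * Cᵀ + R)⁻¹ * C * X)
    (T : ℕ) (hT : 1 ≤ T)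
    (X Y : Matrix (Fin n) (Fin n) ℝ) (hX : X.PosSemidef) (hY : Y.PosSemidef)
    (hXY : (Y - X).PosSemidef) :
    (h Y - h X).PosSemidef ∧ (gt Y - gt X).PosSemidef ∧
      (h^[T] (gt Y) - h^[T] (gt X)).PosSemidef := by
  have hmono : ∀ P P' : Matrix (Fin n) (Fin n) ℝ,
      (P - P').PosSemidef → (h P - h P').PosSemidef := by
    intro P P' hPP
    have : h P - h P' = A * (P - P') * Aᵀ := by
      rw [hh, hh]
      simp only [Matrix.mul_sub, Matrix.sub_mul]
      abel
    rw [this]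
    exact psd_mmT hPP A
  have hgtm : (gt Y - gt X).PosSemidef := by
    rw [hgt, hgt]
    exact gt_mono C R hR X Y hX hY hXY
  have hiter : ∀ (T : ℕ) (P P' : Matrix (Fin n) (Fin n) ℝ),
      (P - P').PosSemidef → (h^[T] P - h^[T] P').PosSemidef := by
    intro T
    induction T with
    | zero => intro P P' hPP; simpa using hPP
    | succ k ih =>
        intro P P' hPP
        rw [Function.iterate_succ_apply', Function.iterate_succ_apply']
        exact hmono _ _ (ih P P' hPP)
  exact ⟨hmono Y X hXY, hgtm, hiter T _ _ hgtm⟩
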